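/- Let w be a word of odd length n such that for some rotation r with 0 < r < n, the rotation of w by r equals w^R. If additionally w = w^R, then w is periodic with period dividing gcd(2r, n), and since n is odd, w equals its rotation by r (i.e., w has period dividing gcd(r,n)). -/

import Mathlib

lemma rotate_mul_self {α : Type*} {w : List α} {r : ℕ} (h : w.rotate r = w) :
    ∀ m, w.rotate (r * m) = w := by
  intro m
  induction m with
  | zero => simp
  | succ k ih =>
    rw [Nat.mul_succ, ← List.rotate_rotate, ih, h]

/-- If a palindrome `w` of odd length `n` satisfies `w.rotate r = w.reverse` for some
`0 < r < n`, then `w` is periodic with period dividing `gcd (2r) n`, and (since `n` is odd)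
`w` equals its rotation by `r` (period dividing `gcd r n`). -/
theorem odd_palindrome_rotation_period {α : Type*} [Fintype α] (n r : ℕ) (hn : Odd n)
    (w : List α) (hw : w.length = n) (hr0 : 0 < r) (hrn : r < n)
    (hrot : w.rotate r = w.reverse) (hpal : w.reverse = w) :
    w.rotate (Nat.gcd (2 * r) n) = w ∧ w.rotate (Nat.gcd r n) = w ∧ w.rotate r = w := by
  rw [hpal] at hrot
  have hg : Nat.gcd r n < n := lt_of_le_of_lt (Nat.le_of_dvd hr0 (Nat.gcd_dvd_left r n)) hrn
  obtain ⟨m, _, hm⟩ := Nat.exists_mul_mod_eq_gcd hg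
  have hgr : w.rotate (Nat.gcd r n) = w := by
    rw [← hm, ← hw, List.rotate_mod]; exact rotate_mul_self hrot m
  have h2 : Nat.gcd (2 * r) n = Nat.gcd r n := by
    have : Nat.Coprime 2 n := Nat.coprime_two_left.mpr hn
    exact Nat.Coprime.gcd_mul_left_cancel r this
  exact ⟨h2 ▸ hgr, hgr, hrot⟩
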